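/- Every bounded, T_Δ-closed subset A of a CAT(0) space X is compact with respect to the weak topology T_Δ. -/

import Mathlib

open Filter Topology Metric Set

/-- `m` is a midpoint of `x` and `y`. -/
def IsMidpoint {X : Type*} [MetricSpace X] (x y m : X) : Prop :=
  dist x m = dist x y / 2 ∧ dist y m = dist x y / 2

/-- A CAT(0) space: a complete metric space with midpoints satisfying the
CN-inequality of Bruhat–Tits. -/
def IsCAT0 (X : Type*) [MetricSpace X] : Prop :=
  CompleteSpace X ∧
    (∀ x y : X, ∃ m : X, IsMidpoint x y m) ∧
    (∀ x y z m : X, IsMidpoint x y m →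
      dist z m ^ 2 ≤ dist z x ^ 2 / 2 + dist z y ^ 2 / 2 - dist x y ^ 2 / 4)

/-- `G` is a (compact) geodesic segment starting at `x`: the image of an
isometric embedding of a compact interval `[0, L]` whose left endpoint is
mapped to `x`. -/
def IsGeodesicSegmentFrom {X : Type*} [MetricSpace X] (x : X) (G : Set X) : Prop :=
  ∃ (L : ℝ) (γ : ℝ → X), 0 ≤ L ∧ γ 0 = x ∧
    (∀ s ∈ Icc (0:ℝ) L, ∀ t ∈ Icc (0:ℝ) L, dist (γ s) (γ t) = |s - t|) ∧
    G = γ '' Icc (0:ℝ) L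

/-- `G` is a geodesic segment from `x` to `y`. -/
def IsGeodesicSegmentBetween {X : Type*} [MetricSpace X] (x y : X) (G : Set X) : Prop :=
  ∃ γ : ℝ → X, γ 0 = x ∧ γ (dist x y) = y ∧
    (∀ s ∈ Icc (0:ℝ) (dist x y), ∀ t ∈ Icc (0:ℝ) (dist x y),
      dist (γ s) (γ t) = |s - t|) ∧
    G = γ '' Icc (0:ℝ) (dist x y)

/-- `p` is a nearest point of `C` to `z` (a closest-point projection of `z`
onto `C`). -/
def IsNearestPoint {X : Type*} [MetricSpace X] (z : X) (C : Set X) (p : X) : Prop :=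
  p ∈ C ∧ ∀ q ∈ C, dist z p ≤ dist z q

/-- Weak (Δ-)convergence of a net `u` (indexed by a preordered set) to `x`:
for every geodesic segment `G` starting at `x`, the closest-point projections
of the `u i` onto `G` converge to `x` in the metric. -/
def WeakConv {X : Type*} [MetricSpace X] {I : Type*} [Preorder I]
    (u : I → X) (x : X) : Prop :=
  ∀ G : Set X, IsGeodesicSegmentFrom x G →
    ∀ p : I → X, (∀ i, IsNearestPoint (u i) G (p i)) → Tendsto p atTop (𝓝 x)

/-- The sets that are closed in the weak topology `T_Δ`: sets containing all
weak limits of bounded sequences of their elements. -/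
def TdeltaClosed {X : Type*} [MetricSpace X] (A : Set X) : Prop :=
  ∀ u : ℕ → X, (∀ n, u n ∈ A) → Bornology.IsBounded (Set.range u) →
    ∀ x : X, WeakConv u x → x ∈ A

/-- `T` is the weak topology `T_Δ`: its closed sets are exactly the weakly
sequentially closed sets. -/
def IsWeakTopology {X : Type*} [MetricSpace X] (T : TopologicalSpace X) : Prop :=
  ∀ A : Set X, @IsClosed X T A ↔ TdeltaClosed A

/-- Geodesic convexity of a subset of a metric space. -/
def GeodesicallyConvex {X : Type*} [MetricSpace X] (C : Set X) : Prop :=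
  ∀ x ∈ C, ∀ y ∈ C, ∀ G : Set X, IsGeodesicSegmentBetween x y G → G ⊆ C

/-- The coconvex topology `T_co`: the coarsest topology on `X` in which every
metrically closed, (geodesically) convex set is closed. -/
def coconvexTopology (X : Type*) [MetricSpace X] : TopologicalSpace X :=
  TopologicalSpace.generateFrom
    {U : Set X | ∃ C : Set X, IsClosed C ∧ GeodesicallyConvex C ∧ U = Cᶜ}


section AuxCAT0
variable {X : Type*} [MetricSpace X]

theorem aux_proj_strong
    (hCN : ∀ x y z m : X, IsMidpoint x y m →
      dist z m ^ 2 ≤ dist z x ^ 2 / 2 + dist z y ^ 2 / 2 - dist x y ^ 2 / 4)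
    {C : Set X} (hconv : ∀ a ∈ C, ∀ b ∈ C, ∃ m ∈ C, IsMidpoint a b m)
    {z p : X} (hp : IsNearestPoint z C p) {y : X} (hy : y ∈ C) :
    dist z p ^ 2 + dist p y ^ 2 ≤ dist z y ^ 2 := by
  have key : ∀ k : ℕ, ∀ y ∈ C,
      dist z p ^ 2 + (1 - (1/2 : ℝ)^k) * dist p y ^ 2 ≤ dist z y ^ 2 := by
    intro k
    induction k with
    | zero =>
      intro y hy
      have h1 := hp.2 y hy
      have h2 : (0:ℝ) ≤ dist z p := dist_nonneg
      simp only [pow_zero, sub_self, zero_mul, add_zero]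
      nlinarith
    | succ k ih =>
      intro y hy
      obtain ⟨m, hmC, hm⟩ := hconv p hp.1 y hy
      have h1 := ih m hmC
      have h2 := hCN p y z m hm
      have h3 : dist p m = dist p y / 2 := hm.1
      have h4 := hp.2 m hmC
      have h5 : (0:ℝ) ≤ dist z p := dist_nonneg
      have h6 : (0:ℝ) ≤ dist z m := dist_nonneg
      have h7 : ((1:ℝ)/2)^(k+1) = (1/2)^k / 2 := by ring
      have h8 : (0:ℝ) ≤ (1/2:ℝ)^k := by positivity
      rw [h3] at h1
      nlinarith [sq_nonneg (dist p y)]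
  refine le_of_forall_pos_le_add ?_
  intro ε hε
  by_cases hd : dist p y = 0
  · have := key 0 y hy
    simp [hd] at this ⊢
    nlinarith
  · have hd2 : 0 < dist p y ^ 2 := by positivity
    obtain ⟨k, hk⟩ := exists_pow_lt_of_lt_one (div_pos hε hd2) (by norm_num : (1/2:ℝ) < 1)
    have := key k y hy
    have hk' : (1/2:ℝ)^k * dist p y ^ 2 < ε := (lt_div_iff₀ hd2).mp hk
    nlinarith

theorem aux_proj_exists [CompleteSpace X]
    (hCN : ∀ x y z m : X, IsMidpoint x y m →
      dist z m ^ 2 ≤ dist z x ^ 2 / 2 + dist z y ^ 2 / 2 - dist x y ^ 2 / 4)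
    {C : Set X} (hcl : IsClosed C) (hne : C.Nonempty)
    (hconv : ∀ a ∈ C, ∀ b ∈ C, ∃ m ∈ C, IsMidpoint a b m) (z : X) :
    ∃ p, IsNearestPoint z C p := by
  set δ := Metric.infDist z C with hδ
  have hδ0 : 0 ≤ δ := Metric.infDist_nonneg
  have happrox : ∀ n : ℕ, ∃ y ∈ C, dist z y < δ + 1/(n+1) := by
    intro n
    have h : δ < δ + 1/(n+1) := by
      have : (0:ℝ) < 1/(n+1) := by positivity
      linarith
    obtain ⟨y, hyC, hy⟩ := (Metric.infDist_lt_iff hne).mp h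
    exact ⟨y, hyC, hy⟩
  choose v hvC hv using happrox
  have hlow : ∀ n, δ ≤ dist z (v n) := fun n => Metric.infDist_le_dist_of_mem (hvC n)
  have hdd : ∀ N n m, N ≤ n → N ≤ m →
      dist (v n) (v m) ^ 2 ≤ 8*δ*(1/(N+1)) + 4*(1/(N+1))^2 := by
    intro N n m hn hm
    obtain ⟨w, hwC, hw⟩ := hconv (v n) (hvC n) (v m) (hvC m)
    have h1 := hCN (v n) (v m) z w hw
    have h2 : δ ≤ dist z w := Metric.infDist_le_dist_of_mem hwC
    have h3 : dist z (v n) < δ + 1/(n+1) := hv n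
    have h4 : dist z (v m) < δ + 1/(m+1) := hv m
    have hn' : (N:ℝ) ≤ n := Nat.cast_le.mpr hn
    have hm' : (N:ℝ) ≤ m := Nat.cast_le.mpr hm
    have h5 : (1:ℝ)/(n+1) ≤ 1/(N+1) := by
      apply one_div_le_one_div_of_le (by positivity); linarith
    have h6 : (1:ℝ)/(m+1) ≤ 1/(N+1) := by
      apply one_div_le_one_div_of_le (by positivity); linarith
    have h7 : (0:ℝ) < 1/(N+1) := by positivity
    have h8 : 0 ≤ dist z (v n) := dist_nonneg
    have h9 : 0 ≤ dist z (v m) := dist_nonneg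
    have e1 : dist z (v n) ≤ δ + 1/(N+1) := by linarith
    have e2 : dist z (v m) ≤ δ + 1/(N+1) := by linarith
    have q1 : dist z (v n)^2 ≤ (δ + 1/(N+1))^2 := by nlinarith
    have q2 : dist z (v m)^2 ≤ (δ + 1/(N+1))^2 := by nlinarith
    have q3 : δ^2 ≤ dist z w ^2 := by nlinarith
    nlinarith [q1, q2, q3, h1]
  have hcauchy : CauchySeq v := by
    refine cauchySeq_of_le_tendsto_0 (fun N => Real.sqrt (8*δ*(1/(N+1)) + 4*(1/(N+1))^2)) ?_ ?_
    · intro n m N hn hm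
      have h := hdd N n m hn hm
      have : dist (v n) (v m) = Real.sqrt (dist (v n) (v m) ^ 2) := by
        rw [Real.sqrt_sq dist_nonneg]
      rw [this]
      exact Real.sqrt_le_sqrt h
    · have ha : Tendsto (fun N : ℕ => (1:ℝ)/(N+1)) atTop (𝓝 0) :=
        tendsto_one_div_add_atTop_nhds_zero_nat
      have h1 : Tendsto (fun N : ℕ => 8*δ*((1:ℝ)/(N+1)) + 4*((1:ℝ)/(N+1))^2) atTop (𝓝 0) := by
        have := (ha.const_mul (8*δ)).add ((ha.pow 2).const_mul 4)
        simpa using this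
      have := (Real.continuous_sqrt.tendsto 0).comp h1
      simpa [Function.comp_def] using this
  obtain ⟨p, hp⟩ := cauchySeq_tendsto_of_complete hcauchy
  have hpC : p ∈ C := hcl.mem_of_tendsto hp (Filter.Eventually.of_forall hvC)
  refine ⟨p, hpC, ?_⟩
  intro q hq
  have hzp : Tendsto (fun n => dist z (v n)) atTop (𝓝 (dist z p)) :=
    (tendsto_const_nhds.dist hp)
  have hle : dist z p ≤ δ := by
    have hrhs : Tendsto (fun n : ℕ => δ + 1/(n+1)) atTop (𝓝 δ) := by
      have := tendsto_one_div_add_atTop_nhds_zero_nat.const_add δ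
      simpa using this
    exact le_of_tendsto_of_tendsto' hzp hrhs (fun n => (hv n).le)
  calc dist z p ≤ δ := hle
    _ ≤ dist z q := Metric.infDist_le_dist_of_mem hq

end AuxCAT0

section MidHull
set_option linter.unusedSectionVars false
variable {X : Type*} [MetricSpace X] {m : X → X → X} {Y Z : Set X}

def midHullSeq {X : Type*} (m : X → X → X) (Y : Set X) : ℕ → Set X
  | 0 => Y
  | n+1 => midHullSeq m Y n ∪ Set.image2 m (midHullSeq m Y n) (midHullSeq m Y n)

def midHull {X : Type*} (m : X → X → X) (Y : Set X) : Set X := ⋃ n, midHullSeq m Y n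

variable {X : Type*} [MetricSpace X] {m : X → X → X} {Y Z : Set X}

theorem midHullSeq_mono_n (k l : ℕ) (h : k ≤ l) : midHullSeq m Y k ⊆ midHullSeq m Y l := by
  induction l with
  | zero => simp_all
  | succ l ih =>
    rcases Nat.le_succ_iff.mp h with h' | h'
    · exact (ih h').trans (by intro x hx; exact Or.inl hx)
    · subst h'; exact le_refl _

theorem subset_midHull : Y ⊆ midHull m Y := fun x hx => mem_iUnion.mpr ⟨0, hx⟩

theorem midHullSeq_mono (h : Y ⊆ Z) : ∀ n, midHullSeq m Y n ⊆ midHullSeq m Z n := by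
  intro n
  induction n with
  | zero => exact h
  | succ n ih =>
    intro x hx
    rcases hx with hx | hx
    · exact Or.inl (ih hx)
    · exact Or.inr (Set.image2_subset ih ih hx)

theorem midHull_mono (h : Y ⊆ Z) : midHull m Y ⊆ midHull m Z := by
  intro x hx
  obtain ⟨n, hn⟩ := mem_iUnion.mp hx
  exact mem_iUnion.mpr ⟨n, midHullSeq_mono h n hn⟩

theorem midHull_countable (h : Y.Countable) : (midHull m Y).Countable := by
  apply Set.countable_iUnion
  intro n
  induction n with
  | zero => exact h
  | succ n ih => exact ih.union (ih.image2 ih m)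

theorem mid_mem_midHull {a b : X} (ha : a ∈ midHull m Y) (hb : b ∈ midHull m Y) :
    m a b ∈ midHull m Y := by
  obtain ⟨i, hi⟩ := mem_iUnion.mp ha
  obtain ⟨j, hj⟩ := mem_iUnion.mp hb
  refine mem_iUnion.mpr ⟨max i j + 1, Or.inr ?_⟩
  exact Set.mem_image2_of_mem (midHullSeq_mono_n i (max i j) (le_max_left _ _) hi)
    (midHullSeq_mono_n j (max i j) (le_max_right _ _) hj)

theorem midHull_subset_closedBall
    (hCN : ∀ x y z m : X, IsMidpoint x y m →
      dist z m ^ 2 ≤ dist z x ^ 2 / 2 + dist z y ^ 2 / 2 - dist x y ^ 2 / 4)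
    (hm : ∀ a b : X, IsMidpoint a b (m a b))
    {c : X} {R : ℝ} (hR : 0 ≤ R) (hY : Y ⊆ closedBall c R) :
    midHull m Y ⊆ closedBall c R := by
  have main : ∀ n, midHullSeq m Y n ⊆ closedBall c R := by
    intro n
    induction n with
    | zero => exact hY
    | succ n ih =>
      rintro x (hx | hx)
      · exact ih hx
      · obtain ⟨a, ha, b, hb, rfl⟩ := hx
        have ha' : dist a c ≤ R := ih ha
        have hb' : dist b c ≤ R := ih hb
        have h1 := hCN a b c (m a b) (hm a b)
        have h2 : dist c (m a b) ^ 2 ≤ R ^ 2 := by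
          rw [dist_comm c a, dist_comm c b] at h1
          nlinarith [sq_nonneg (dist a b), dist_nonneg (x := a) (y := c), dist_nonneg (x := b) (y := c)]
        rw [mem_closedBall, dist_comm]
        nlinarith [dist_nonneg (x := c) (y := m a b)]
  intro x hx
  obtain ⟨n, hn⟩ := mem_iUnion.mp hx
  exact main n hn

theorem closure_mid_mem
    (hCN : ∀ x y z m : X, IsMidpoint x y m →
      dist z m ^ 2 ≤ dist z x ^ 2 / 2 + dist z y ^ 2 / 2 - dist x y ^ 2 / 4)
    (hm : ∀ a b : X, IsMidpoint a b (m a b))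
    {D : Set X} (hD : ∀ a ∈ D, ∀ b ∈ D, m a b ∈ D)
    {a b : X} (ha : a ∈ closure D) (hb : b ∈ closure D) :
    m a b ∈ closure D := by
  obtain ⟨u, huD, hu⟩ := mem_closure_iff_seq_limit.mp ha
  obtain ⟨v, hvD, hv⟩ := mem_closure_iff_seq_limit.mp hb
  refine mem_closure_of_tendsto (f := fun n => m (u n) (v n)) (b := atTop) ?_
    (Filter.Eventually.of_forall fun n => hD _ (huD n) _ (hvD n))
  -- show m (u n) (v n) → m a b
  have key : Tendsto (fun n => dist (m a b) (m (u n) (v n))) atTop (𝓝 0) := by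
    have hbound : ∀ n, dist (m a b) (m (u n) (v n)) ^ 2 ≤
        dist (m a b) (u n) ^ 2 / 2 + dist (m a b) (v n) ^ 2 / 2 - dist (u n) (v n) ^ 2 / 4 :=
      fun n => hCN (u n) (v n) (m a b) (m (u n) (v n)) (hm (u n) (v n))
    have h1 : Tendsto (fun n => dist (m a b) (u n)) atTop (𝓝 (dist (m a b) a)) :=
      tendsto_const_nhds.dist hu
    have h2 : Tendsto (fun n => dist (m a b) (v n)) atTop (𝓝 (dist (m a b) b)) :=
      tendsto_const_nhds.dist hv
    have h3 : Tendsto (fun n => dist (u n) (v n)) atTop (𝓝 (dist a b)) := hu.dist hv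
    have hma : dist (m a b) a = dist a b / 2 := by rw [dist_comm]; exact (hm a b).1
    have hmb : dist (m a b) b = dist a b / 2 := by rw [dist_comm]; exact (hm a b).2
    have hrhs : Tendsto (fun n => dist (m a b) (u n) ^ 2 / 2 + dist (m a b) (v n) ^ 2 / 2
        - dist (u n) (v n) ^ 2 / 4) atTop (𝓝 0) := by
      have := (((h1.pow 2).div_const 2).add ((h2.pow 2).div_const 2)).sub ((h3.pow 2).div_const 4)
      rw [hma, hmb] at this
      convert this using 2
      ring
    -- squeeze: 0 ≤ dist ≤ sqrt rhs
    have hsq : ∀ n, dist (m a b) (m (u n) (v n)) ≤ Real.sqrt (dist (m a b) (u n) ^ 2 / 2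
        + dist (m a b) (v n) ^ 2 / 2 - dist (u n) (v n) ^ 2 / 4) := by
      intro n
      have := hbound n
      nlinarith [Real.sq_sqrt (le_trans (sq_nonneg _) this), Real.sqrt_nonneg (dist (m a b) (u n) ^ 2 / 2
        + dist (m a b) (v n) ^ 2 / 2 - dist (u n) (v n) ^ 2 / 4), dist_nonneg (x := m a b) (y := m (u n) (v n))]
    have hsqrt0 : Tendsto (fun n => Real.sqrt (dist (m a b) (u n) ^ 2 / 2
        + dist (m a b) (v n) ^ 2 / 2 - dist (u n) (v n) ^ 2 / 4)) atTop (𝓝 0) := by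
      have := (Real.continuous_sqrt.tendsto 0).comp hrhs
      simpa [Function.comp_def] using this
    exact squeeze_zero (fun n => dist_nonneg) hsq hsqrt0
  exact tendsto_iff_dist_tendsto_zero.mpr (by simpa [dist_comm] using key)


end MidHull

section AuxCAT0b
variable {X : Type*} [MetricSpace X]

theorem aux_center_exists [CompleteSpace X]
    (hCN : ∀ x y z m : X, IsMidpoint x y m →
      dist z m ^ 2 ≤ dist z x ^ 2 / 2 + dist z y ^ 2 / 2 - dist x y ^ 2 / 4)
    (hmid : ∀ x y : X, ∃ m : X, IsMidpoint x y m)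
    (F : Ultrafilter X) (A : Set X) (hA : A ∈ F) (hbdd : Bornology.IsBounded A) :
    ∃ (φ : X → ℝ) (xb : X), (∀ y, Tendsto (fun z => dist z y ^ 2) F (𝓝 (φ y))) ∧
      (∀ y, φ xb ≤ φ y) := by
  have hAne : A.Nonempty := F.nonempty_of_mem hA
  obtain ⟨a0, ha0⟩ := hAne
  obtain ⟨R, hR⟩ := hbdd.subset_closedBall a0
  -- existence of ultrafilter limits
  have hlim : ∀ y : X, ∃ l, Tendsto (fun z => dist z y ^ 2) F (𝓝 l) := by
    intro y
    set K := (R + dist a0 y) ^ 2 with hK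
    have hmapsto : ∀ z ∈ A, dist z y ^ 2 ∈ Icc (0:ℝ) K := by
      intro z hz
      constructor
      · positivity
      · have h1 : dist z y ≤ R + dist a0 y := by
          calc dist z y ≤ dist z a0 + dist a0 y := dist_triangle _ _ _
            _ ≤ R + dist a0 y := by
                have := hR hz
                rw [mem_closedBall] at this
                linarith
        have h2 : (0:ℝ) ≤ dist z y := dist_nonneg
        nlinarith
    have hle : ↑(F.map (fun z => dist z y ^ 2)) ≤ 𝓟 (Icc (0:ℝ) K) := by
      rw [le_principal_iff, Ultrafilter.coe_map, Filter.mem_map]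
      exact mem_of_superset hA hmapsto
    obtain ⟨l, _, hl⟩ := (isCompact_Icc (a := (0:ℝ)) (b := K)).ultrafilter_le_nhds _ hle
    exact ⟨l, hl⟩
  choose φ hφ using hlim
  have hφ0 : ∀ y, 0 ≤ φ y := fun y =>
    ge_of_tendsto (hφ y) (Filter.Eventually.of_forall fun z => sq_nonneg _)
  -- the infimum
  have : Nonempty X := ⟨a0⟩
  have hbdd_below : BddBelow (Set.range φ) := ⟨0, by rintro _ ⟨y, rfl⟩; exact hφ0 y⟩
  set c := ⨅ y, φ y with hc
  have hlowc : ∀ y, c ≤ φ y := fun y => ciInf_le hbdd_below y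
  have happrox : ∀ n : ℕ, ∃ y, φ y < c + 1/(n+1) := by
    intro n
    apply exists_lt_of_ciInf_lt
    have : (0:ℝ) < 1/(n+1) := by positivity
    linarith
  choose v hv using happrox
  -- CN inequality for φ
  choose mid hm using hmid
  have hφCN : ∀ a b : X, φ (mid a b) ≤ φ a / 2 + φ b / 2 - dist a b ^ 2 / 4 := by
    intro a b
    have h1 : Tendsto (fun z => dist z a ^ 2 / 2 + dist z b ^ 2 / 2 - dist a b ^ 2 / 4) F
        (𝓝 (φ a / 2 + φ b / 2 - dist a b ^ 2 / 4)) :=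
      (((hφ a).div_const 2).add ((hφ b).div_const 2)).sub tendsto_const_nhds
    exact le_of_tendsto_of_tendsto' (hφ (mid a b)) h1
      (fun z => hCN a b z (mid a b) (hm a b))
  -- minimizing sequence is Cauchy
  have hdd : ∀ N n k : ℕ, N ≤ n → N ≤ k →
      dist (v n) (v k) ^ 2 ≤ 8 * (1/(N+1)) := by
    intro N n k hn hk
    have h1 := hφCN (v n) (v k)
    have h2 : c ≤ φ (mid (v n) (v k)) := hlowc _
    have hn' : (N:ℝ) ≤ n := Nat.cast_le.mpr hn
    have hk' : (N:ℝ) ≤ k := Nat.cast_le.mpr hk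
    have h5 : (1:ℝ)/(n+1) ≤ 1/(N+1) := by
      apply one_div_le_one_div_of_le (by positivity); linarith
    have h6 : (1:ℝ)/(k+1) ≤ 1/(N+1) := by
      apply one_div_le_one_div_of_le (by positivity); linarith
    have h3 := hv n
    have h4 := hv k
    nlinarith
  have hcauchy : CauchySeq v := by
    refine cauchySeq_of_le_tendsto_0 (fun N => Real.sqrt (8 * (1/(N+1)))) ?_ ?_
    · intro n k N hn hk
      have h := hdd N n k hn hk
      have : dist (v n) (v k) = Real.sqrt (dist (v n) (v k) ^ 2) := by
        rw [Real.sqrt_sq dist_nonneg]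
      rw [this]
      exact Real.sqrt_le_sqrt h
    · have ha : Tendsto (fun N : ℕ => (1:ℝ)/(N+1)) atTop (𝓝 0) :=
        tendsto_one_div_add_atTop_nhds_zero_nat
      have h1 : Tendsto (fun N : ℕ => 8 * ((1:ℝ)/(N+1))) atTop (𝓝 0) := by
        have := ha.const_mul 8
        simpa using this
      exact ((Real.continuous_sqrt.tendsto' 0 0 Real.sqrt_zero).comp h1).congr (fun N => rfl)
  obtain ⟨xb, hxb⟩ := cauchySeq_tendsto_of_complete hcauchy
  -- continuity estimate: φ xb ≤ φ (v n) + error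
  have hcont : ∀ y y' : X,
      φ y' ≤ φ y + (2*(R + dist a0 y) + dist y y') * dist y y' := by
    intro y y'
    have h1 : Tendsto (fun z => dist z y ^ 2 + (2*(R + dist a0 y) + dist y y') * dist y y') F
        (𝓝 (φ y + (2*(R + dist a0 y) + dist y y') * dist y y')) :=
      (hφ y).add tendsto_const_nhds
    refine le_of_tendsto_of_tendsto (hφ y') h1 ?_
    filter_upwards [hA] with z hz
    have hzy : dist z y ≤ R + dist a0 y := by
      calc dist z y ≤ dist z a0 + dist a0 y := dist_triangle _ _ _
        _ ≤ R + dist a0 y := by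
            have := hR hz; rw [mem_closedBall] at this; linarith
    have htri : dist z y' ≤ dist z y + dist y y' := dist_triangle _ _ _
    have h0 : (0:ℝ) ≤ dist z y := dist_nonneg
    have h0' : (0:ℝ) ≤ dist z y' := dist_nonneg
    have h0'' : (0:ℝ) ≤ dist y y' := dist_nonneg
    nlinarith
  have hφxb : φ xb ≤ c := by
    have hlim2 : Tendsto (fun n => φ (v n) + (2*(R + dist a0 (v n)) + dist (v n) xb)
        * dist (v n) xb) atTop (𝓝 c) := by
      have hd1 : Tendsto (fun n => dist (v n) xb) atTop (𝓝 0) := by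
        rw [tendsto_iff_dist_tendsto_zero] at hxb
        exact hxb
      have hd2 : Tendsto (fun n => dist a0 (v n)) atTop (𝓝 (dist a0 xb)) :=
        tendsto_const_nhds.dist hxb
      have hφv : Tendsto (fun n => φ (v n)) atTop (𝓝 c) := by
        have hup : Tendsto (fun n : ℕ => c + 1/(n+1)) atTop (𝓝 c) := by
          have := tendsto_one_div_add_atTop_nhds_zero_nat.const_add c
          simpa using this
        exact tendsto_of_tendsto_of_tendsto_of_le_of_le tendsto_const_nhds hup
          (fun n => hlowc _) (fun n => (hv n).le)
      have : Tendsto (fun n => φ (v n) + (2*(R + dist a0 (v n)) + dist (v n) xb)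
          * dist (v n) xb) atTop (𝓝 (c + (2*(R + dist a0 xb) + 0) * 0)) := by
        exact hφv.add ((((hd2.const_add R).const_mul 2).add hd1).mul hd1)
      simpa using this
    exact ge_of_tendsto hlim2 (Filter.Eventually.of_forall fun n => hcont (v n) xb)
  exact ⟨φ, xb, hφ, fun y => le_trans hφxb (hlowc y)⟩

end AuxCAT0b

set_option maxHeartbeats 1000000 in
theorem aux_star {X : Type*} [MetricSpace X] (hX : IsCAT0 X)
    (F : Ultrafilter X) (φ : X → ℝ)
    (hφ : ∀ y, Tendsto (fun z => dist z y ^ 2) (F : Filter X) (𝓝 (φ y)))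
    (xb : X) (hmin : ∀ y, φ xb ≤ φ y)
    (B : Set X) (hB : TdeltaClosed B) (hBF : B ∈ F) : xb ∈ B := by
  classical
  obtain ⟨hcomp, hmid, hCN⟩ := hX
  haveI : CompleteSpace X := hcomp
  choose mid hm using hmid
  have hφ0 : 0 ≤ φ xb := ge_of_tendsto (hφ xb) (Eventually.of_forall fun z => sq_nonneg _)
  obtain ⟨R1, hR1one, hR1φ⟩ : ∃ R1 : ℝ, 1 ≤ R1 ∧ φ xb + 1 ≤ R1 :=
    ⟨max 1 (φ xb + 1), le_max_left _ _, le_max_right _ _⟩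
  have hR1pos : (0:ℝ) < R1 := lt_of_lt_of_le one_pos hR1one
  -- ============ PHASE 1 : construction of the test sequence ============
  have main : ∃ (u : ℕ → X) (D : Set X),
      (∀ n, u n ∈ B) ∧
      (∀ n : ℕ, dist (u n) xb ^ 2 < φ xb + 1/((n:ℝ)+1)) ∧
      (∀ y ∈ D, ∃ N : ℕ, ∀ n, N ≤ n → φ y - 1/((n:ℝ)+1) < dist (u n) y ^ 2) ∧
      (∀ n, u n ∈ D) ∧ (∀ a ∈ D, ∀ b ∈ D, mid a b ∈ D) ∧ D ⊆ closedBall xb R1 := by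
    set ee : Set X → ℕ → X := fun s =>
      if h : s.Countable ∧ s.Nonempty then (h.1.exists_eq_range h.2).choose else fun _ => xb
      with hee
    have hee_range : ∀ s : Set X, s.Countable → s.Nonempty → s = Set.range (ee s) := by
      intro s h1 h2
      rw [hee]
      simp only [dif_pos (And.intro h1 h2)]
      exact ((And.intro h1 h2).1.exists_eq_range (And.intro h1 h2).2).choose_spec
    set Dk : (ℕ → X) → ℕ → Set X := fun f k => midHull mid ({xb} ∪ f '' Iio k) with hDk
    have hDk_count : ∀ f k, (Dk f k).Countable := fun f k =>
      midHull_countable ((countable_singleton xb).union ((Set.to_countable _).image f))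
    have hDk_ne : ∀ f k, (Dk f k).Nonempty := fun f k =>
      ⟨xb, subset_midHull (Or.inl rfl)⟩
    set Q : ℕ → (ℕ → X) → Set X := fun n f =>
      {z | z ∈ B ∧ dist z xb ^ 2 < φ xb + 1/((n:ℝ)+1) ∧
        ∀ k ≤ n, ∀ j ≤ n,
          φ (ee (Dk f k) j) - 1/((n:ℝ)+1) < dist z (ee (Dk f k) j) ^ 2} with hQ
    have hQmem : ∀ n f, Q n f ∈ F := by
      intro n f
      have hpos : (0:ℝ) < 1/((n:ℝ)+1) := by positivity
      have h1 : {z : X | dist z xb ^ 2 < φ xb + 1/((n:ℝ)+1)} ∈ F :=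
        (hφ xb).eventually (eventually_lt_nhds (by linarith))
      have h2 : ∀ y : X, {z : X | φ y - 1/((n:ℝ)+1) < dist z y ^ 2} ∈ F := fun y =>
        (hφ y).eventually (eventually_gt_nhds (by linarith))
      have h3 : {z : X | ∀ k ≤ n, ∀ j ≤ n,
          φ (ee (Dk f k) j) - 1/((n:ℝ)+1) < dist z (ee (Dk f k) j) ^ 2} ∈ F := by
        have heq : {z : X | ∀ k ≤ n, ∀ j ≤ n,
            φ (ee (Dk f k) j) - 1/((n:ℝ)+1) < dist z (ee (Dk f k) j) ^ 2} =
            ⋂ k ∈ Finset.range (n+1), ⋂ j ∈ Finset.range (n+1),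
              {z : X | φ (ee (Dk f k) j) - 1/((n:ℝ)+1) < dist z (ee (Dk f k) j) ^ 2} := by
          ext z
          simp [Nat.lt_succ_iff]
        rw [heq]
        exact (Filter.biInter_finset_mem _).mpr fun k _ =>
          (Filter.biInter_finset_mem _).mpr fun j _ => h2 _
      have hq : B ∩ ({z : X | dist z xb ^ 2 < φ xb + 1/((n:ℝ)+1)} ∩
          {z : X | ∀ k ≤ n, ∀ j ≤ n,
            φ (ee (Dk f k) j) - 1/((n:ℝ)+1) < dist z (ee (Dk f k) j) ^ 2}) ∈ F :=
        inter_mem hBF (inter_mem h1 h3)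
      exact mem_of_superset hq (fun z hz => ⟨hz.1, hz.2.1, hz.2.2⟩)
    set pick : ℕ → (ℕ → X) → X := fun n f => (F.nonempty_of_mem (hQmem n f)).some with hpick
    have hpick_mem : ∀ n f, pick n f ∈ Q n f := fun n f =>
      (F.nonempty_of_mem (hQmem n f)).some_mem
    set G0 : ℕ → ℕ → X :=
      fun n => Nat.rec (fun _ => xb) (fun n g => Function.update g n (pick n g)) n with hG0
    set u : ℕ → X := fun n => G0 (n+1) n with hu
    have hG0succ : ∀ n, G0 (n+1) = Function.update (G0 n) n (pick n (G0 n)) := fun n => rfl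
    have hupick : ∀ n, u n = pick n (G0 n) := by
      intro n
      show G0 (n+1) n = _
      rw [hG0succ n]
      exact Function.update_self n _ (G0 n)
    have hagree : ∀ m i, i < m → G0 m i = u i := by
      intro m
      induction m with
      | zero => intro i hi; exact absurd hi (Nat.not_lt_zero i)
      | succ m ih =>
        intro i hi
        rcases Nat.lt_succ_iff_lt_or_eq.mp hi with h | h
        · rw [hG0succ m, Function.update_of_ne (Nat.ne_of_lt h)]
          exact ih i h
        · subst h; rfl
    have hDk_stable : ∀ n k, k ≤ n → Dk (G0 n) k = Dk u k := by
      intro n k hk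
      have himg : (G0 n) '' Iio k = u '' Iio k :=
        Set.image_congr (fun i hi => hagree n i (lt_of_lt_of_le hi hk))
      rw [hDk]
      simp only
      rw [himg]
    have huQ : ∀ n, u n ∈ Q n u := by
      intro n
      have h0 : u n ∈ Q n (G0 n) := by rw [hupick n]; exact hpick_mem n (G0 n)
      obtain ⟨hz1, hz2, hz3⟩ := h0
      refine ⟨hz1, hz2, ?_⟩
      intro k hk j hj
      rw [← hDk_stable n k hk]
      exact hz3 k hk j hj
    have huB : ∀ n, u n ∈ B := fun n => (huQ n).1
    have hud : ∀ n, dist (u n) xb ^ 2 < φ xb + 1/((n:ℝ)+1) := fun n => (huQ n).2.1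
    set D : Set X := ⋃ k, Dk u k with hD
    have hulow : ∀ y ∈ D, ∃ N : ℕ, ∀ n, N ≤ n → φ y - 1/((n:ℝ)+1) < dist (u n) y ^ 2 := by
      intro y hy
      obtain ⟨k, hk⟩ := mem_iUnion.mp hy
      rw [hee_range _ (hDk_count u k) (hDk_ne u k)] at hk
      obtain ⟨j, hj⟩ := hk
      refine ⟨max k j, fun n hn => ?_⟩
      have h := (huQ n).2.2 k (le_trans (le_max_left _ _) hn) j (le_trans (le_max_right _ _) hn)
      rw [hj] at h
      exact h
    have huball : ∀ n, dist (u n) xb ≤ R1 := by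
      intro n
      have h := hud n
      have h1n : (1:ℝ)/((n:ℝ)+1) ≤ 1 := by
        rw [div_le_one (by positivity)]
        have : (0:ℝ) ≤ (n:ℝ) := Nat.cast_nonneg n
        linarith
      by_cases hle : dist (u n) xb ≤ 1
      · exact le_trans hle hR1one
      · push_neg at hle
        have h2 : dist (u n) xb ≤ dist (u n) xb ^ 2 := by nlinarith
        have h3 : dist (u n) xb ≤ φ xb + 1 := by nlinarith
        exact le_trans h3 hR1φ
    have hbase : ∀ k, ({xb} ∪ u '' Iio k) ⊆ closedBall xb R1 := by
      rintro k z (rfl | ⟨i, _, rfl⟩)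
      · exact mem_closedBall.mpr (by rw [dist_self]; linarith)
      · exact mem_closedBall.mpr (huball i)
    have hDball : D ⊆ closedBall xb R1 := by
      intro z hz
      obtain ⟨k, hk⟩ := mem_iUnion.mp hz
      exact midHull_subset_closedBall hCN hm hR1pos.le (hbase k) hk
    have hDmono : ∀ k l : ℕ, k ≤ l → Dk u k ⊆ Dk u l := fun k l h =>
      midHull_mono (union_subset_union_right _ (image_mono (Iio_subset_Iio h)))
    have hDmid : ∀ a ∈ D, ∀ b ∈ D, mid a b ∈ D := by
      intro a ha b hb
      obtain ⟨k, hk⟩ := mem_iUnion.mp ha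
      obtain ⟨l, hl⟩ := mem_iUnion.mp hb
      exact mem_iUnion.mpr ⟨max k l,
        mid_mem_midHull (hDmono k _ (le_max_left _ _) hk) (hDmono l _ (le_max_right _ _) hl)⟩
    have huD : ∀ n, u n ∈ D := fun n =>
      mem_iUnion.mpr ⟨n+1, subset_midHull (Or.inr ⟨n, Nat.lt_succ_self n, rfl⟩)⟩
    exact ⟨u, D, huB, hud, hulow, huD, hDmid, hDball⟩
  obtain ⟨u, D, huB, hud, hulow, huD, hDmid, hDball⟩ := main
  -- ============ PHASE 2 : u weakly converges to xb ============
  have hSball : closure D ⊆ closedBall xb R1 := closure_minimal hDball isClosed_closedBall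
  have hSconv : ∀ a ∈ closure D, ∀ b ∈ closure D, ∃ w ∈ closure D, IsMidpoint a b w :=
    fun a ha b hb => ⟨mid a b, closure_mid_mem hCN hm hDmid ha hb, hm a b⟩
  have hSne : (closure D).Nonempty := ⟨u 0, subset_closure (huD 0)⟩
  have huS : ∀ n, u n ∈ closure D := fun n => subset_closure (huD n)
  have huball : ∀ n, dist (u n) xb ≤ R1 := by
    intro n
    have h := hud n
    have h1n : (1:ℝ)/((n:ℝ)+1) ≤ 1 := by
      rw [div_le_one (by positivity)]
      have : (0:ℝ) ≤ (n:ℝ) := Nat.cast_nonneg n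
      linarith
    by_cases hle : dist (u n) xb ≤ 1
    · exact le_trans hle hR1one
    · push_neg at hle
      have h2 : dist (u n) xb ≤ dist (u n) xb ^ 2 := by nlinarith
      have h3 : dist (u n) xb ≤ φ xb + 1 := by nlinarith
      exact le_trans h3 hR1φ
  have hweak : WeakConv u xb := by
    intro Gs hGs pp hpp
    obtain ⟨L, γ, hL, hγ0, hiso, hGdef⟩ := hGs
    have hxbG : xb ∈ Gs := by rw [hGdef]; exact ⟨0, ⟨le_refl 0, hL⟩, hγ0⟩
    have hGconv : ∀ a ∈ Gs, ∀ b ∈ Gs, ∃ w ∈ Gs, IsMidpoint a b w := by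
      intro a ha b hb
      rw [hGdef] at ha hb
      obtain ⟨s, hs, rfl⟩ := ha
      obtain ⟨t', ht', rfl⟩ := hb
      have hmem : (s + t')/2 ∈ Icc (0:ℝ) L :=
        ⟨by linarith [hs.1, ht'.1], by linarith [hs.2, ht'.2]⟩
      refine ⟨γ ((s + t')/2), by rw [hGdef]; exact ⟨(s+t')/2, hmem, rfl⟩, ?_, ?_⟩
      · rw [hiso s hs _ hmem, hiso s hs t' ht']
        rw [show s - (s + t')/2 = (s - t')/2 by ring, abs_div]
        norm_num
      · rw [hiso t' ht' _ hmem, hiso s hs t' ht']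
        rw [show t' - (s + t')/2 = -((s - t')/2) by ring, abs_neg, abs_div]
        norm_num
    rw [Metric.tendsto_atTop]
    by_contra hcon
    push_neg at hcon
    obtain ⟨ε, hε, hbad⟩ := hcon
    obtain ⟨ψ0, hψ0mono, hψ0⟩ :=
      Filter.extraction_of_frequently_atTop (Filter.frequently_atTop.mpr hbad)
    have hppG : ∀ n, pp n ∈ Gs := fun n => (hpp n).1
    have ht : ∀ n, ∃ s, s ∈ Icc (0:ℝ) L ∧ γ s = pp n := by
      intro n
      have h := hppG n
      rw [hGdef] at h
      obtain ⟨s, hs1, hs2⟩ := h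
      exact ⟨s, hs1, hs2⟩
    choose t htIcc hγt using ht
    obtain ⟨τ, hτIcc, ψ1, hψ1mono, hψ1⟩ :=
      (isCompact_Icc (a := (0:ℝ)) (b := L)).tendsto_subseq (fun n => htIcc (ψ0 n))
    obtain ⟨ψ, hψmono, hψeq⟩ : ∃ ψ : ℕ → ℕ, StrictMono ψ ∧ ∀ n, ψ n = ψ0 (ψ1 n) :=
      ⟨ψ0 ∘ ψ1, hψ0mono.comp hψ1mono, fun n => rfl⟩
    set q : X := γ τ with hq
    have hdistq : ∀ n, dist (pp (ψ n)) q = |t (ψ n) - τ| := by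
      intro n
      rw [← hγt (ψ n)]
      exact hiso _ (htIcc _) _ hτIcc
    have hδ : Tendsto (fun n => dist (pp (ψ n)) q) atTop (𝓝 0) := by
      have h1 : Tendsto (fun n => t (ψ n) - τ) atTop (𝓝 0) := by
        have h2 : Tendsto (fun n => t (ψ0 (ψ1 n)) - τ) atTop (𝓝 0) := by
          have := hψ1.sub (tendsto_const_nhds (x := τ))
          simpa using this
        exact h2.congr (fun n => by rw [← hψeq n])
      have h2 := h1.abs
      rw [abs_zero] at h2
      exact h2.congr (fun n => (hdistq n).symm)
    have hεpp : ∀ n, ε ≤ dist (pp (ψ n)) xb := by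
      intro n
      rw [hψeq n]
      exact hψ0 (ψ1 n)
    have hεq : ε ≤ dist q xb := by
      have hppq : Tendsto (fun n => pp (ψ n)) atTop (𝓝 q) :=
        tendsto_iff_dist_tendsto_zero.mpr hδ
      have h1 : Tendsto (fun n => dist (pp (ψ n)) xb) atTop (𝓝 (dist q xb)) :=
        hppq.dist tendsto_const_nhds
      exact ge_of_tendsto h1 (Eventually.of_forall hεpp)
    have hproj : ∀ n, dist (u n) (pp n) ^ 2 + dist (pp n) xb ^ 2 ≤ dist (u n) xb ^ 2 :=
      fun n => aux_proj_strong hCN hGconv (hpp n) hxbG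
    obtain ⟨q', hq'⟩ := aux_proj_exists hCN isClosed_closure hSne hSconv q
    have hq'S : q' ∈ closure D := hq'.1
    have hq'ball : dist q' xb ≤ R1 := mem_closedBall.mp (hSball hq'S)
    have hstrongS : ∀ n, dist q q' ^ 2 + dist q' (u n) ^ 2 ≤ dist q (u n) ^ 2 :=
      fun n => aux_proj_strong hCN hSconv hq' (huS n)
    -- upper bound along the subsequence
    have hupper : ∀ n, dist (u (ψ n)) q' ^ 2 ≤ φ xb + 1/((ψ n : ℝ)+1) - ε^2
        + dist (pp (ψ n)) q * (2*R1 + dist (pp (ψ n)) q) := by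
      intro n
      have h2 : ε ≤ dist (pp (ψ n)) xb := hεpp n
      have h3 : dist (u (ψ n)) (pp (ψ n)) ≤ R1 :=
        le_trans ((hpp (ψ n)).2 xb hxbG) (huball (ψ n))
      have h4 : dist (u (ψ n)) q ≤ dist (u (ψ n)) (pp (ψ n)) + dist (pp (ψ n)) q :=
        dist_triangle _ _ _
      have e0 : dist (u (ψ n)) q' ^ 2 ≤ dist (u (ψ n)) q ^ 2 := by
        have h6 := hstrongS (ψ n)
        rw [dist_comm q' (u (ψ n)), dist_comm q (u (ψ n))] at h6
        nlinarith [sq_nonneg (dist q q')]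
      have e1 : dist (u (ψ n)) q ^ 2
          ≤ (dist (u (ψ n)) (pp (ψ n)) + dist (pp (ψ n)) q) ^ 2 :=
        pow_le_pow_left₀ dist_nonneg h4 2
      have e2 : dist (u (ψ n)) (pp (ψ n)) ^ 2 ≤ φ xb + 1/((ψ n : ℝ)+1) - ε^2 := by
        have ha := hproj (ψ n)
        have hb := hud (ψ n)
        have hc : ε^2 ≤ dist (pp (ψ n)) xb ^ 2 := pow_le_pow_left₀ hε.le h2 2
        linarith
      have e3 : (0:ℝ) ≤ dist (pp (ψ n)) q := dist_nonneg
      have e4 : (0:ℝ) ≤ dist (u (ψ n)) (pp (ψ n)) := dist_nonneg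
      nlinarith [mul_le_mul_of_nonneg_right h3 e3]
    -- lower bound for the whole sequence
    obtain ⟨η, hηpos, hη1, hη2⟩ : ∃ η : ℝ, 0 < η ∧ η ≤ 1 ∧ η ≤ ε^2/(16*R1) :=
      ⟨min 1 (ε^2/(16*R1)), lt_min one_pos (by positivity), min_le_left _ _, min_le_right _ _⟩
    obtain ⟨y, hyD, hyq'⟩ := Metric.mem_closure_iff.mp hq'S η hηpos
    obtain ⟨N, hN⟩ := hulow y hyD
    have hlower : ∀ n, N ≤ n →
        φ xb - 1/((n:ℝ)+1) - (4*R1*η + η^2) ≤ dist (u n) q' ^ 2 := by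
      intro n hn
      have h1 := hN n hn
      have h2 : φ xb ≤ φ y := hmin y
      have ha2 : dist (u n) q' ≤ 2*R1 := by
        calc dist (u n) q' ≤ dist (u n) xb + dist xb q' := dist_triangle _ _ _
          _ ≤ R1 + R1 := by rw [dist_comm xb q']; linarith [huball n, hq'ball]
          _ = 2*R1 := by ring
      have hab : |dist (u n) q' - dist (u n) y| ≤ dist q' y := by
        have h := abs_dist_sub_le q' y (u n)
        rw [dist_comm q' (u n), dist_comm y (u n)] at h
        exact h
      have hba : dist (u n) y ≤ dist (u n) q' + η := by
        have h := (abs_le.mp hab).1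
        linarith [hyq'.le]
      have h0a : (0:ℝ) ≤ dist (u n) q' := dist_nonneg
      have h0b : (0:ℝ) ≤ dist (u n) y := dist_nonneg
      have k1 : (0:ℝ) ≤ dist (u n) q' + η - dist (u n) y := by linarith
      have k2 : (0:ℝ) ≤ dist (u n) q' + η + dist (u n) y := by linarith [hηpos.le]
      nlinarith [mul_nonneg k1 k2, mul_le_mul_of_nonneg_right ha2 hηpos.le]
    -- final contradiction
    have hδsmall : ∀ᶠ n in atTop,
        dist (pp (ψ n)) q * (2*R1 + dist (pp (ψ n)) q) < ε^2/8 := by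
      have hc : Tendsto (fun n => dist (pp (ψ n)) q * (2*R1 + dist (pp (ψ n)) q)) atTop
          (𝓝 (0 * (2*R1 + 0))) := hδ.mul (hδ.const_add (2*R1))
      rw [show (0:ℝ) * (2*R1 + 0) = 0 by ring] at hc
      exact hc.eventually (eventually_lt_nhds (by positivity))
    obtain ⟨M1, hM1⟩ := exists_nat_one_div_lt (show (0:ℝ) < ε^2/8 by positivity)
    obtain ⟨M2, hM2⟩ := eventually_atTop.mp hδsmall
    obtain ⟨n0, hNn0, hM1n0, hM2n0⟩ : ∃ n0 : ℕ, N ≤ n0 ∧ M1 ≤ n0 ∧ M2 ≤ n0 :=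
      ⟨max (max N M1) M2, le_trans (le_max_left _ _) (le_max_left _ _),
        le_trans (le_max_right _ _) (le_max_left _ _), le_max_right _ _⟩
    have hψge : n0 ≤ ψ n0 := hψmono.le_apply
    have hfrac : 1/((ψ n0 : ℝ)+1) < ε^2/8 := by
      have hcast : (M1:ℝ) ≤ (ψ n0 : ℝ) := Nat.cast_le.mpr (le_trans hM1n0 hψge)
      have h : 1/((ψ n0 : ℝ)+1) ≤ 1/((M1:ℝ)+1) := by
        apply one_div_le_one_div_of_le (by positivity)
        linarith
      linarith
    have hδn0 : dist (pp (ψ n0)) q * (2*R1 + dist (pp (ψ n0)) q) < ε^2/8 := hM2 n0 hM2n0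
    have hup := hupper n0
    have hlo := hlower (ψ n0) (le_trans hNn0 hψge)
    have hηbound : 4*R1*η ≤ ε^2/4 := by
      have h := mul_le_mul_of_nonneg_left hη2 (by linarith : (0:ℝ) ≤ 4*R1)
      calc 4*R1*η ≤ 4*R1*(ε^2/(16*R1)) := h
        _ = ε^2/4 := by field_simp; ring
    have hη2bound : η^2 ≤ ε^2/16 := by
      have h1 : η^2 ≤ η * 1 := by nlinarith
      have h2 : η ≤ ε^2/16 := by
        have hr : ε^2/(16*R1) ≤ ε^2/16 := by
          apply div_le_div_of_nonneg_left (by positivity) (by norm_num)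
          linarith
        linarith
      linarith
    have hε2 : (0:ℝ) < ε^2 := by positivity
    linarith
  -- ============ PHASE 3 : conclude ============
  have hbounded : Bornology.IsBounded (Set.range u) := by
    apply (Metric.isBounded_closedBall (x := xb) (r := R1)).subset
    rintro _ ⟨n, rfl⟩
    exact mem_closedBall.mpr (huball n)
  exact hB u huB hbounded xb hweak


/-- Every bounded `T_Δ`-closed subset of a CAT(0) space is
`T_Δ`-compact. -/
theorem bounded_weakly_closed_is_compact
    (X : Type*) [MetricSpace X] (hX : IsCAT0 X)
    (TΔ : TopologicalSpace X) (hTΔ : IsWeakTopology TΔ)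
    (A : Set X) (hAb : Bornology.IsBounded A) (hAcl : @IsClosed X TΔ A) :
    @IsCompact X TΔ A := by
  classical
  haveI : CompleteSpace X := hX.1
  rw [@isCompact_iff_ultrafilter_le_nhds X TΔ A]
  intro F hFA
  have hA : A ∈ F := le_principal_iff.mp hFA
  obtain ⟨φ, xb, hφ, hmin⟩ := aux_center_exists hX.2.2 hX.2.1 F A hA hAb
  have hstar : ∀ B : Set X, TdeltaClosed B → B ∈ F → xb ∈ B :=
    fun B hB hBF => aux_star hX F φ hφ xb hmin B hB hBF
  refine ⟨xb, hstar A ((hTΔ A).mp hAcl) hA, ?_⟩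
  rw [@le_nhds_iff X TΔ xb (F : Filter X)]
  intro s hxs hso
  by_contra hs
  have h1 : sᶜ ∈ F := Ultrafilter.compl_mem_iff_notMem.mpr hs
  have h2 : @IsClosed X TΔ sᶜ := @IsOpen.isClosed_compl X TΔ s hso
  have h3 : xb ∈ sᶜ := hstar sᶜ ((hTΔ sᶜ).mp h2) h1
  exact h3 hxs
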